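/- arXiv:1903.10942 — 5 statements merged into one kernel-verified Lean document; each statement's English description precedes it below -/
import Mathlib

section
/- Let L ⊆ ℝ² be a closed line segment of length |L| < 2r. Define the r-spindle S(L,r) as the intersection of all closed balls of radius r whose boundary spheres contain both endpoints of L. Then the maximal distance from a point of S(L,r) to L is r − √(r² − |L|²/4). -/
open Metric

lemma dist_sq2 (p q : EuclideanSpace ℝ (Fin 2)) :
    dist p q = Real.sqrt ((p 0 - q 0)^2 + (p 1 - q 1)^2) := by
  rw [EuclideanSpace.dist_eq, Fin.sum_univ_two]
  simp [Real.dist_eq, sq_abs]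

lemma dist_le_of2 {p q : EuclideanSpace ℝ (Fin 2)} {r : ℝ} (hr : 0 ≤ r)
    (h : (p 0 - q 0)^2 + (p 1 - q 1)^2 ≤ r^2) : dist p q ≤ r := by
  rw [dist_sq2]
  calc Real.sqrt _ ≤ Real.sqrt (r^2) := Real.sqrt_le_sqrt h
  _ = r := by rw [Real.sqrt_sq hr]

lemma sq_le_of_dist_le2 {p q : EuclideanSpace ℝ (Fin 2)} {r : ℝ}
    (h : dist p q ≤ r) : (p 0 - q 0)^2 + (p 1 - q 1)^2 ≤ r^2 := by
  rw [dist_sq2] at h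
  have h0 : (0:ℝ) ≤ (p 0 - q 0)^2 + (p 1 - q 1)^2 := by positivity
  nlinarith [Real.sq_sqrt h0, Real.sqrt_nonneg ((p 0 - q 0)^2 + (p 1 - q 1)^2)]

lemma dist_eq_of2 {p q : EuclideanSpace ℝ (Fin 2)} {r : ℝ} (hr : 0 ≤ r)
    (h : (p 0 - q 0)^2 + (p 1 - q 1)^2 = r^2) : dist p q = r := by
  rw [dist_sq2, h, Real.sqrt_sq hr]

lemma sq_of_dist_eq2 {p q : EuclideanSpace ℝ (Fin 2)} {r : ℝ}
    (h : dist p q = r) : (p 0 - q 0)^2 + (p 1 - q 1)^2 = r^2 := by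
  rw [← h, dist_sq2, Real.sq_sqrt (by positivity)]

lemma aux_le_of_sq_le {s r : ℝ} (h0 : 0 ≤ s) (hr : 0 < r) (hsq : s^2 ≤ r^2) : s ≤ r := by
  nlinarith

lemma aux_sq_le_sq {s c : ℝ} (h1 : -c ≤ s) (h2 : s ≤ c) : s^2 ≤ c^2 := by
  nlinarith

lemma aux_low_of_sq {t d : ℝ} (hd : 0 < d) (h : t^2 ≤ d^2/4) : -(d/2) ≤ t := by
  nlinarith [sq_nonneg (t + d/2)]

lemma aux_high_of_sq {t d : ℝ} (hd : 0 < d) (h : t^2 ≤ d^2/4) : t ≤ d/2 := by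
  nlinarith [sq_nonneg (t - d/2)]

lemma aux_tau_nonneg {τ d t : ℝ} (hd : 0 < d) (h : τ * d = d/2 + t) (ht : -(d/2) ≤ t) :
    0 ≤ τ := by nlinarith

lemma aux_tau_le_one {τ d t : ℝ} (hd : 0 < d) (h : τ * d = d/2 + t) (ht : t ≤ d/2) :
    τ ≤ 1 := by nlinarith

set_option maxHeartbeats 1000000 in
/-- The maximal distance from a point of the `r`-spindle `S(L,r)` around a
segment `L` of length `< 2r` to the segment is `r − √(r² − |L|²/4)`. -/
theorem stmt2 (r : ℝ) (hr : 0 < r) (x y : EuclideanSpace ℝ (Fin 2))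
    (hxy : dist x y < 2 * r) :
    (⨆ p ∈ {p : EuclideanSpace ℝ (Fin 2) |
        ∀ c : EuclideanSpace ℝ (Fin 2), dist c x = r → dist c y = r → p ∈ closedBall c r},
      Metric.infDist p (segment ℝ x y)) =
    r - Real.sqrt (r ^ 2 - dist x y ^ 2 / 4) := by
  rcases eq_or_ne x y with rfl | hne
  · -- degenerate case x = y
    have hsq : Real.sqrt (r ^ 2 - dist x x ^ 2 / 4) = r := by
      rw [dist_self]
      simp [Real.sqrt_sq hr.le]
    rw [hsq, segment_same, sub_self]
    refine le_antisymm ?_ (Real.iSup_nonneg fun p => Real.iSup_nonneg fun _ => infDist_nonneg)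
    refine Real.iSup_le (fun p => Real.iSup_le (fun hp => ?_) le_rfl) le_rfl
    rw [infDist_singleton]
    by_contra hcon
    push_neg at hcon
    have hpx : (0:ℝ) < dist p x := hcon
    set c : EuclideanSpace ℝ (Fin 2) := x + (r / dist p x) • (x - p) with hc
    have hcx : dist c x = r := by
      have h1 : c - x = (r / dist p x) • (x - p) := by rw [hc]; abel
      rw [dist_eq_norm, h1, norm_smul]
      have : ‖x - p‖ = dist p x := by rw [← dist_eq_norm, dist_comm]
      rw [this, Real.norm_eq_abs, abs_of_nonneg (by positivity)]
      field_simp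
    have hmem := hp c hcx hcx
    rw [mem_closedBall] at hmem
    have h2 : p - c = (1 + r / dist p x) • (p - x) := by rw [hc]; module
    have hpc : dist p c = dist p x + r := by
      rw [dist_eq_norm, h2, norm_smul]
      have : ‖p - x‖ = dist p x := by rw [← dist_eq_norm]
      rw [this, Real.norm_eq_abs, abs_of_nonneg (by positivity)]
      field_simp
    linarith only [hmem, hpc, hcon]
  · -- main case x ≠ y
    set d := dist x y with hd
    have hdpos : 0 < d := dist_pos.2 hne
    have hdne : d ≠ 0 := hdpos.ne'
    have hd0 : (0:ℝ) ≤ d := hdpos.le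
    have hr24 : (0:ℝ) ≤ r ^ 2 - d ^ 2 / 4 := by nlinarith only [hxy, hd0, hd]
    set h := Real.sqrt (r ^ 2 - d ^ 2 / 4) with hhdef
    have hh2 : h ^ 2 = r ^ 2 - d ^ 2 / 4 := Real.sq_sqrt hr24
    have hh0 : (0:ℝ) ≤ h := Real.sqrt_nonneg _
    have hhr : h ≤ r := by nlinarith only [hh2, hh0, hr, sq_nonneg d]
    have hrh0 : (0:ℝ) ≤ r - h := sub_nonneg.2 hhr
    have hdd : d ^ 2 = (x 0 - y 0)^2 + (x 1 - y 1)^2 := by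
      rw [hd, dist_sq2 x y, Real.sq_sqrt (by positivity)]
    set m0 : ℝ := (x 0 + y 0) / 2 with hm0
    set m1 : ℝ := (x 1 + y 1) / 2 with hm1
    set u0 : ℝ := -(y 1 - x 1) / d with hu0
    set u1 : ℝ := (y 0 - x 0) / d with hu1
    have hu : u0 ^ 2 + u1 ^ 2 = 1 := by
      rw [hu0, hu1]
      field_simp
      linear_combination -hdd
    have hx0 : x 0 = m0 - u1 * d / 2 := by rw [hm0, hu1]; field_simp; try ring
    have hx1 : x 1 = m1 + u0 * d / 2 := by rw [hm1, hu0]; field_simp; try ring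
    have hy0 : y 0 = m0 + u1 * d / 2 := by rw [hm0, hu1]; field_simp; try ring
    have hy1 : y 1 = m1 - u0 * d / 2 := by rw [hm1, hu0]; field_simp; try ring
    set E := (EuclideanSpace.equiv (Fin 2) ℝ).symm with hE
    set c₁ : EuclideanSpace ℝ (Fin 2) := E ![m0 + h * u0, m1 + h * u1] with hc₁
    set c₂ : EuclideanSpace ℝ (Fin 2) := E ![m0 - h * u0, m1 - h * u1] with hc₂
    set pst : EuclideanSpace ℝ (Fin 2) := E ![m0 + (r - h) * u0, m1 + (r - h) * u1] with hpst
    have hc10 : c₁ 0 = m0 + h * u0 := rfl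
    have hc11 : c₁ 1 = m1 + h * u1 := rfl
    have hc20 : c₂ 0 = m0 - h * u0 := rfl
    have hc21 : c₂ 1 = m1 - h * u1 := rfl
    have hpst0 : pst 0 = m0 + (r - h) * u0 := rfl
    have hpst1 : pst 1 = m1 + (r - h) * u1 := rfl
    have hc1x : dist c₁ x = r := by
      apply dist_eq_of2 hr.le
      rw [hc10, hc11, hx0, hx1]
      linear_combination (h^2 + d^2/4) * hu + hh2
    have hc1y : dist c₁ y = r := by
      apply dist_eq_of2 hr.le
      rw [hc10, hc11, hy0, hy1]
      linear_combination (h^2 + d^2/4) * hu + hh2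
    have hc2x : dist c₂ x = r := by
      apply dist_eq_of2 hr.le
      rw [hc20, hc21, hx0, hx1]
      linear_combination (h^2 + d^2/4) * hu + hh2
    have hc2y : dist c₂ y = r := by
      apply dist_eq_of2 hr.le
      rw [hc20, hc21, hy0, hy1]
      linear_combination (h^2 + d^2/4) * hu + hh2
    -- the spindle point farthest from the segment
    have hpstS : ∀ c : EuclideanSpace ℝ (Fin 2),
        dist c x = r → dist c y = r → pst ∈ closedBall c r := by
      intro c hcx hcy
      have e1 := sq_of_dist_eq2 hcx
      have e2 := sq_of_dist_eq2 hcy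
      rw [hx0, hx1] at e1
      rw [hy0, hy1] at e2
      obtain ⟨a, ha⟩ : ∃ a, c 0 = m0 + a := ⟨c 0 - m0, by ring⟩
      obtain ⟨b, hb⟩ : ∃ b, c 1 = m1 + b := ⟨c 1 - m1, by ring⟩
      rw [ha, hb] at e1 e2
      have ht' : d * (a * u1 - b * u0) = 0 := by
        linear_combination (1/2 : ℝ) * e1 - (1/2 : ℝ) * e2
      have ht : a * u1 - b * u0 = 0 := by
        rcases mul_eq_zero.1 ht' with h' | h'
        · exact absurd h' hdne
        · exact h'
      have hab : a ^ 2 + b ^ 2 = h ^ 2 := by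
        linear_combination (1/2 : ℝ) * e1 + (1/2 : ℝ) * e2 - hh2 - (d^2/4) * hu
      have hs0 : (a * u0 + b * u1 - h) * (a * u0 + b * u1 + h) = 0 := by
        linear_combination (u0^2 + u1^2) * hab + h^2 * hu - (a * u1 - b * u0) * ht
      rw [mem_closedBall]
      apply dist_le_of2 hr.le
      rw [hpst0, hpst1, ha, hb]
      rcases mul_eq_zero.1 hs0 with hcase | hcase
      · have haa : a = h * u0 := by linear_combination u0 * hcase + u1 * ht - a * hu
        have hbb : b = h * u1 := by linear_combination u1 * hcase - u0 * ht - b * hu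
        have e : ((m0 + (r - h) * u0) - (m0 + a))^2 + ((m1 + (r - h) * u1) - (m1 + b))^2
            = (r - 2*h)^2 := by
          rw [haa, hbb]; linear_combination (r - 2*h)^2 * hu
        have hnn : 0 ≤ h * (r - h) := mul_nonneg hh0 hrh0
        linarith only [e, hnn]
      · have haa : a = -(h * u0) := by linear_combination u0 * hcase + u1 * ht - a * hu
        have hbb : b = -(h * u1) := by linear_combination u1 * hcase - u0 * ht - b * hu
        have e : ((m0 + (r - h) * u0) - (m0 + a))^2 + ((m1 + (r - h) * u1) - (m1 + b))^2
            = r^2 := by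
          rw [haa, hbb]; linear_combination r^2 * hu
        linarith only [e]
    -- the distance from pst to the segment is r - h
    have hpstdist : Metric.infDist pst (segment ℝ x y) = r - h := by
      apply le_antisymm
      · have hmem : x + (1/2 : ℝ) • (y - x) ∈ segment ℝ x y := by
          rw [segment_eq_image']
          exact ⟨1/2, ⟨by norm_num, by norm_num⟩, rfl⟩
        refine le_trans (infDist_le_dist_of_mem hmem) (le_of_eq ?_)
        apply dist_eq_of2 hrh0
        have hq0 : (x + (1/2 : ℝ) • (y - x)) 0 = x 0 + (1/2 : ℝ) * (y 0 - x 0) := rfl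
        have hq1 : (x + (1/2 : ℝ) • (y - x)) 1 = x 1 + (1/2 : ℝ) * (y 1 - x 1) := rfl
        rw [hpst0, hpst1, hq0, hq1, hx0, hx1, hy0, hy1]
        linear_combination (r - h)^2 * hu
      · refine le_of_not_gt fun hlt => ?_
        obtain ⟨q, hq, hqlt⟩ := (infDist_lt_iff ⟨x, left_mem_segment ℝ x y⟩).1 hlt
        rw [segment_eq_image'] at hq
        obtain ⟨θ, ⟨hθ0, hθ1⟩, rfl⟩ := hq
        have hge : r - h ≤ dist pst (x + θ • (y - x)) := by
          rw [dist_sq2]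
          have hq0 : (x + θ • (y - x)) 0 = x 0 + θ * (y 0 - x 0) := rfl
          have hq1 : (x + θ • (y - x)) 1 = x 1 + θ * (y 1 - x 1) := rfl
          rw [hpst0, hpst1, hq0, hq1, hx0, hx1, hy0, hy1]
          refine (Real.le_sqrt hrh0 (by positivity)).2 ?_
          have e : (m0 + (r - h) * u0 - (m0 - u1 * d / 2 + θ * (m0 + u1 * d / 2 - (m0 - u1 * d / 2))))^2
              + (m1 + (r - h) * u1 - (m1 + u0 * d / 2 + θ * (m1 - u0 * d / 2 - (m1 + u0 * d / 2))))^2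
              = (r - h)^2 + ((1/2 - θ) * d)^2 := by
            linear_combination ((r - h)^2 + (1/2 - θ)^2 * d^2) * hu
          linarith only [e, sq_nonneg ((1/2 - θ) * d)]
        linarith only [hge, hqlt]
    -- upper bound for arbitrary points of the spindle
    have hub : ∀ p : EuclideanSpace ℝ (Fin 2),
        (∀ c : EuclideanSpace ℝ (Fin 2), dist c x = r → dist c y = r → p ∈ closedBall c r) →
        Metric.infDist p (segment ℝ x y) ≤ r - h := by
      intro p hp
      have h1 := sq_le_of_dist_le2 (mem_closedBall.1 (hp c₁ hc1x hc1y))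
      have h2 := sq_le_of_dist_le2 (mem_closedBall.1 (hp c₂ hc2x hc2y))
      rw [hc10, hc11] at h1
      rw [hc20, hc21] at h2
      obtain ⟨a, ha⟩ : ∃ a, p 0 = m0 + a := ⟨p 0 - m0, by ring⟩
      obtain ⟨b, hb⟩ : ∃ b, p 1 = m1 + b := ⟨p 1 - m1, by ring⟩
      rw [ha, hb] at h1 h2
      have heq1 : (a*u0 + b*u1 - h)^2 + (a*u1 - b*u0)^2
          = ((m0+a) - (m0 + h*u0))^2 + ((m1+b) - (m1 + h*u1))^2
            + (a^2 + b^2 - h^2) * (u0^2 + u1^2 - 1) := by ring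
      have heq2 : (a*u0 + b*u1 + h)^2 + (a*u1 - b*u0)^2
          = ((m0+a) - (m0 - h*u0))^2 + ((m1+b) - (m1 - h*u1))^2
            + (a^2 + b^2 - h^2) * (u0^2 + u1^2 - 1) := by ring
      have h1s : (a*u0 + b*u1 - h)^2 + (a*u1 - b*u0)^2 ≤ r^2 := by
        rw [heq1, hu]; simpa using h1
      have h2s : (a*u0 + b*u1 + h)^2 + (a*u1 - b*u0)^2 ≤ r^2 := by
        rw [heq2, hu]; simpa using h2
      -- bounds on the normal and tangential coordinates
      have hs2 : (a*u0 + b*u1)^2 ≤ (r - h)^2 := by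
        rcases le_or_gt 0 (a*u0 + b*u1) with hsgn | hsgn
        · have hq : (a*u0 + b*u1 + h)^2 ≤ r^2 := by
            linarith only [h2s, sq_nonneg (a*u1 - b*u0)]
          have hsh : a*u0 + b*u1 + h ≤ r :=
            aux_le_of_sq_le (by linarith only [hsgn, hh0]) hr hq
          exact aux_sq_le_sq (by linarith only [hsgn, hrh0]) (by linarith only [hsh])
        · have hq : (h - (a*u0 + b*u1))^2 ≤ r^2 := by
            linarith only [h1s, sq_nonneg (a*u1 - b*u0)]
          have hsh : h - (a*u0 + b*u1) ≤ r :=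
            aux_le_of_sq_le (by linarith only [hsgn, hh0]) hr hq
          exact aux_sq_le_sq (by linarith only [hsh]) (by linarith only [hsgn, hrh0])
      have ht2 : (a*u1 - b*u0)^2 ≤ d^2/4 := by
        rcases le_or_gt 0 (a*u0 + b*u1) with hsgn | hsgn
        · linarith only [h2s, mul_nonneg hsgn hh0, sq_nonneg (a*u0 + b*u1), hh2]
        · linarith only [h1s, mul_nonneg (neg_nonneg.2 hsgn.le) hh0, sq_nonneg (a*u0 + b*u1), hh2]
      have htlow : -(d/2) ≤ a*u1 - b*u0 := aux_low_of_sq hdpos ht2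
      have hthigh : a*u1 - b*u0 ≤ d/2 := aux_high_of_sq hdpos ht2
      obtain ⟨τ, hτd⟩ : ∃ τ : ℝ, τ * d = d/2 + (a*u1 - b*u0) :=
        ⟨(d/2 + (a*u1 - b*u0))/d, by field_simp⟩
      have hτ0 : (0:ℝ) ≤ τ := aux_tau_nonneg hdpos hτd htlow
      have hτ1 : τ ≤ 1 := aux_tau_le_one hdpos hτd hthigh
      have hqmem : x + τ • (y - x) ∈ segment ℝ x y := by
        rw [segment_eq_image']
        exact ⟨τ, ⟨hτ0, hτ1⟩, rfl⟩
      refine le_trans (infDist_le_dist_of_mem hqmem) ?_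
      apply dist_le_of2 hrh0
      have hq0 : (x + τ • (y - x)) 0 = m0 + u1 * (a*u1 - b*u0) := by
        show x 0 + τ * (y 0 - x 0) = _
        rw [hx0, hy0]
        linear_combination u1 * hτd
      have hq1 : (x + τ • (y - x)) 1 = m1 - u0 * (a*u1 - b*u0) := by
        show x 1 + τ * (y 1 - x 1) = _
        rw [hx1, hy1]
        linear_combination (-u0) * hτd
      rw [hq0, hq1, ha, hb]
      have hfin : ((m0+a) - (m0 + u1*(a*u1 - b*u0)))^2 + ((m1+b) - (m1 - u0*(a*u1 - b*u0)))^2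
          = (a*u0 + b*u1)^2 := by
        linear_combination ((a*u1 - b*u0)^2 - a^2 - b^2) * hu
      linarith only [hfin, hs2]
    -- assemble
    apply le_antisymm
    · exact Real.iSup_le (fun p => Real.iSup_le (fun hp => hub p hp) hrh0) hrh0
    · have hbdd : BddAbove (Set.range fun p : EuclideanSpace ℝ (Fin 2) =>
          ⨆ _ : p ∈ {p : EuclideanSpace ℝ (Fin 2) |
            ∀ c : EuclideanSpace ℝ (Fin 2), dist c x = r → dist c y = r → p ∈ closedBall c r},
          Metric.infDist p (segment ℝ x y)) := by
        refine ⟨r - h, ?_⟩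
        rintro z ⟨p, rfl⟩
        exact Real.iSup_le (fun hp => hub p hp) hrh0
      refine le_ciSup_of_le hbdd pst ?_
      have hmem : pst ∈ {p : EuclideanSpace ℝ (Fin 2) |
          ∀ c : EuclideanSpace ℝ (Fin 2), dist c x = r → dist c y = r → p ∈ closedBall c r} :=
        hpstS
      have hb2 : BddAbove (Set.range fun _ : pst ∈ {p : EuclideanSpace ℝ (Fin 2) |
          ∀ c : EuclideanSpace ℝ (Fin 2), dist c x = r → dist c y = r → p ∈ closedBall c r} =>
          Metric.infDist pst (segment ℝ x y)) := by
        refine ⟨Metric.infDist pst (segment ℝ x y), ?_⟩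
        rintro z ⟨_, rfl⟩
        exact le_rfl
      exact le_trans hpstdist.ge (le_ciSup hb2 hmem)
end

section
/- Let L be a closed line segment in ℝ² of length |L| < 2r. Then the r-spindle S(L,r) equals the intersection of all closed balls of radius at most r that contain L. -/
open Metric Complex

set_option maxHeartbeats 1000000 in
lemma spindle_core (a h r s α β γ δ : ℝ) (ha : 0 ≤ a) (hh : 0 ≤ h)
    (hh2 : h ^ 2 = r ^ 2 - a ^ 2) (hs0 : 0 ≤ s) (hsr : s ≤ r)
    (h1 : α ^ 2 + (β - h) ^ 2 ≤ r ^ 2) (h2 : α ^ 2 + (β + h) ^ 2 ≤ r ^ 2)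
    (h3 : (γ + a) ^ 2 + δ ^ 2 ≤ s ^ 2) (h4 : (γ - a) ^ 2 + δ ^ 2 ≤ s ^ 2) :
    (α - γ) ^ 2 + (β - δ) ^ 2 ≤ s ^ 2 := by
  have hA : α ^ 2 + β ^ 2 + 2 * |β| * h ≤ a ^ 2 := by
    rcases abs_cases β with ⟨hb, _⟩ | ⟨hb, _⟩ <;> nlinarith
  have hB : (|γ| + a) ^ 2 + δ ^ 2 ≤ s ^ 2 := by
    rcases abs_cases γ with ⟨hg, _⟩ | ⟨hg, _⟩ <;> nlinarith
  have hδ : |δ| ≤ h := by nlinarith [abs_nonneg δ, _root_.sq_abs δ, abs_nonneg γ, sq_nonneg (|γ| + a)]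
  have hα : |α| ≤ a := by nlinarith [_root_.sq_abs α, abs_nonneg α, mul_nonneg (abs_nonneg β) hh]
  nlinarith [mul_nonneg (sub_nonneg.2 hα) (abs_nonneg γ),
    mul_nonneg (abs_nonneg β) (sub_nonneg.2 hδ),
    neg_abs_le (α * γ), abs_mul α γ, neg_abs_le (β * δ), abs_mul β δ,
    _root_.sq_abs γ, _root_.sq_abs α]

lemma spindle_complex (r : ℝ) (hr : 0 < r) (x y p : ℂ) (hxy : dist x y < 2 * r)
    (hp : ∀ c : ℂ, dist c x = r → dist c y = r → dist p c ≤ r)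
    (c : ℂ) (s : ℝ) (hs : s ≤ r) (hx : dist x c ≤ s) (hy : dist y c ≤ s) :
    dist p c ≤ s := by
  have hs0 : 0 ≤ s := le_trans dist_nonneg hx
  set m : ℂ := (x + y) / 2 with hm
  set a : ℝ := dist x y / 2 with ha_def
  have ha : 0 ≤ a := by positivity
  have har : a < r := by rw [ha_def]; linarith
  obtain ⟨u, hu1, hxu, hyu⟩ :
      ∃ u : ℂ, ‖u‖ = 1 ∧ x = m - (a : ℂ) * u ∧ y = m + (a : ℂ) * u := by
    rcases eq_or_ne y x with h | h
    · refine ⟨1, by simp, ?_, ?_⟩ <;>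
        · subst h
          simp only [hm, ha_def, dist_self, zero_div, Complex.ofReal_zero, zero_mul]
          ring
    · have hd0 : (0 : ℝ) < dist x y := dist_pos.2 (Ne.symm h)
      refine ⟨(y - x) / (dist x y : ℂ), ?_, ?_, ?_⟩
      · rw [norm_div, Complex.norm_real, Real.norm_eq_abs, abs_of_pos hd0]
        rw [show ‖y - x‖ = dist y x from (Complex.dist_eq y x).symm, dist_comm]
        field_simp
      · have : ((a : ℂ)) * ((y - x) / (dist x y : ℂ)) = (y - x) / 2 := by
          rw [ha_def]
          have : ((dist x y : ℝ) : ℂ) ≠ 0 := by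
            exact_mod_cast ne_of_gt hd0
          push_cast
          field_simp
        rw [this, hm]; ring
      · have : ((a : ℂ)) * ((y - x) / (dist x y : ℂ)) = (y - x) / 2 := by
          rw [ha_def]
          have : ((dist x y : ℝ) : ℂ) ≠ 0 := by
            exact_mod_cast ne_of_gt hd0
          push_cast
          field_simp
        rw [this, hm]; ring
  have hu0 : u ≠ 0 := by
    intro h0; rw [h0] at hu1; simp at hu1
  set h' : ℝ := Real.sqrt (r ^ 2 - a ^ 2) with hh'
  have hh0 : 0 ≤ h' := Real.sqrt_nonneg _
  have hh2 : h' ^ 2 = r ^ 2 - a ^ 2 := Real.sq_sqrt (by nlinarith)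
  have sqabs : ∀ z : ℂ, (‖z‖) ^ 2 = z.re ^ 2 + z.im ^ 2 := fun z => by
    rw [Complex.sq_norm, Complex.normSq_apply]; ring
  have habs : ∀ v w : ℝ, ‖((v : ℂ) + (w : ℂ) * I) * u‖ = Real.sqrt (v ^ 2 + w ^ 2) := by
    intro v w
    rw [norm_mul, hu1, mul_one, Complex.norm_add_mul_I]
  have hsr2 : Real.sqrt (a ^ 2 + h' ^ 2) = r := by
    rw [hh2, show a ^ 2 + (r ^ 2 - a ^ 2) = r ^ 2 by ring, Real.sqrt_sq hr.le]
  -- the two sphere centers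
  have hc1 : dist p (m + (h' : ℂ) * u * I) ≤ r := by
    apply hp
    · rw [Complex.dist_eq, show m + (h' : ℂ) * u * I - x = ((a : ℂ) + (h' : ℂ) * I) * u by
        rw [hxu]; ring]
      rw [habs, hsr2]
    · rw [Complex.dist_eq, show m + (h' : ℂ) * u * I - y = ((-a : ℝ) + (h' : ℂ) * I) * u by
        rw [hyu]; push_cast; ring]
      rw [habs, show (-a : ℝ) ^ 2 + h' ^ 2 = a ^ 2 + h' ^ 2 by ring, hsr2]
  have hc2 : dist p (m - (h' : ℂ) * u * I) ≤ r := by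
    apply hp
    · rw [Complex.dist_eq, show m - (h' : ℂ) * u * I - x = ((a : ℂ) + ((-h' : ℝ) : ℂ) * I) * u by
        rw [hxu]; push_cast; ring]
      rw [habs, show a ^ 2 + (-h' : ℝ) ^ 2 = a ^ 2 + h' ^ 2 by ring, hsr2]
    · rw [Complex.dist_eq, show m - (h' : ℂ) * u * I - y = (((-a : ℝ) : ℂ) + ((-h' : ℝ) : ℂ) * I) * u by
        rw [hyu]; push_cast; ring]
      rw [habs, show (-a : ℝ) ^ 2 + (-h' : ℝ) ^ 2 = a ^ 2 + h' ^ 2 by ring, hsr2]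
  set q : ℂ := (p - m) / u with hqdef
  set d : ℂ := (c - m) / u with hddef
  have hq : q * u = p - m := div_mul_cancel₀ _ hu0
  have hd : d * u = c - m := div_mul_cancel₀ _ hu0
  have e1 : q.re ^ 2 + (q.im - h') ^ 2 ≤ r ^ 2 := by
    have E : dist p (m + (h' : ℂ) * u * I) = ‖q - (h' : ℂ) * I‖ := by
      rw [Complex.dist_eq, show p - (m + (h' : ℂ) * u * I) = (q - (h' : ℂ) * I) * u by
        rw [sub_mul, hq]; ring, norm_mul, hu1, mul_one]
    have h2 := pow_le_pow_left₀ (norm_nonneg _) (E ▸ hc1) 2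
    rw [sqabs] at h2
    simpa using h2
  have e2 : q.re ^ 2 + (q.im + h') ^ 2 ≤ r ^ 2 := by
    have E : dist p (m - (h' : ℂ) * u * I) = ‖q + (h' : ℂ) * I‖ := by
      rw [Complex.dist_eq, show p - (m - (h' : ℂ) * u * I) = (q + (h' : ℂ) * I) * u by
        rw [add_mul, hq]; ring, norm_mul, hu1, mul_one]
    have h2 := pow_le_pow_left₀ (norm_nonneg _) (E ▸ hc2) 2
    rw [sqabs] at h2
    simpa using h2
  have e3 : (d.re + a) ^ 2 + d.im ^ 2 ≤ s ^ 2 := by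
    have E : dist x c = ‖d + (a : ℂ)‖ := by
      rw [Complex.dist_eq, show x - c = -((d + (a : ℂ)) * u) by
        rw [add_mul, hd, hxu]; ring, norm_neg, norm_mul, hu1, mul_one]
    have h2 := pow_le_pow_left₀ (norm_nonneg _) (E ▸ hx) 2
    rw [sqabs] at h2
    simpa using h2
  have e4 : (d.re - a) ^ 2 + d.im ^ 2 ≤ s ^ 2 := by
    have E : dist y c = ‖d - (a : ℂ)‖ := by
      rw [Complex.dist_eq, show y - c = -((d - (a : ℂ)) * u) by
        rw [sub_mul, hd, hyu]; ring, norm_neg, norm_mul, hu1, mul_one]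
    have h2 := pow_le_pow_left₀ (norm_nonneg _) (E ▸ hy) 2
    rw [sqabs] at h2
    simpa using h2
  have key := spindle_core a h' r s q.re q.im d.re d.im ha hh0 hh2 hs0 hs e1 e2 e3 e4
  have E : dist p c = ‖q - d‖ := by
    rw [Complex.dist_eq, show p - c = (q - d) * u by
      rw [sub_mul, hq, hd]; ring, norm_mul, hu1, mul_one]
  rw [E]
  have h2 : (‖q - d‖) ^ 2 ≤ s ^ 2 := by
    rw [sqabs]
    simpa using key
  nlinarith [norm_nonneg (q - d)]

/-- The `r`-spindle around a segment `L` of length `< 2r` (defined as the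
intersection of all closed `r`-balls whose bounding spheres contain both
endpoints of `L`) equals the intersection of all closed balls of radius at
most `r` that contain `L`. -/
theorem stmt3 (r : ℝ) (hr : 0 < r) (x y : EuclideanSpace ℝ (Fin 2))
    (hxy : dist x y < 2 * r) :
    {p : EuclideanSpace ℝ (Fin 2) |
        ∀ c : EuclideanSpace ℝ (Fin 2), dist c x = r → dist c y = r → p ∈ closedBall c r} =
    {p : EuclideanSpace ℝ (Fin 2) |
        ∀ (c : EuclideanSpace ℝ (Fin 2)) (s : ℝ), s ≤ r →
          segment ℝ x y ⊆ closedBall c s → p ∈ closedBall c s} := by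
  ext p
  simp only [Set.mem_setOf_eq, mem_closedBall]
  constructor
  · intro hp c s hs hseg
    have hx : dist x c ≤ s := by
      simpa [mem_closedBall] using hseg (left_mem_segment ℝ x y)
    have hy : dist y c ≤ s := by
      simpa [mem_closedBall] using hseg (right_mem_segment ℝ x y)
    set φ := Complex.orthonormalBasisOneI.repr.symm with hφ
    have hxy' : dist (φ x) (φ y) < 2 * r := by rwa [φ.dist_map]
    have hp' : ∀ c' : ℂ, dist c' (φ x) = r → dist c' (φ y) = r → dist (φ p) c' ≤ r := by
      intro c' h1 h2
      have e1 : dist (φ.symm c') x = r := by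
        rw [← φ.dist_map, φ.apply_symm_apply]; exact h1
      have e2 : dist (φ.symm c') y = r := by
        rw [← φ.dist_map, φ.apply_symm_apply]; exact h2
      have := hp (φ.symm c') e1 e2
      rw [← φ.apply_symm_apply c', φ.dist_map]
      exact this
    have := spindle_complex r hr (φ x) (φ y) (φ p) hxy' hp' (φ c) s hs
      (by rwa [φ.dist_map]) (by rwa [φ.dist_map])
    rwa [φ.dist_map] at this
  · intro hp c h1 h2
    refine hp c r le_rfl ((convex_closedBall c r).segment_subset ?_ ?_)
    · exact mem_closedBall.2 (le_of_eq (by rw [dist_comm, h1]))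
    · exact mem_closedBall.2 (le_of_eq (by rw [dist_comm, h2]))
end

section
/- Let X ⊆ ℝ² be r-regular and let x, y ∈ ∂X with ‖x − y‖ < 2r, and let L be the segment between them. Then the image π(L) of L under the nearest-point projection π onto ∂X is contained in every closed ball of radius at most r containing L. -/
open Metric

section Aux

local notation "E2" => EuclideanSpace ℝ (Fin 2)

/-- If two closed balls of radius `r > 0` intersect in exactly `{p}`, then `p` is the
midpoint of the centers and lies at distance exactly `r` from each center. -/
lemma aux_tangent {r : ℝ} (hr : 0 < r) {p xb xw : E2}
    (h : closedBall xb r ∩ closedBall xw r = {p}) :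
    dist p xb = r ∧ xw - p = -(xb - p) := by
  have hp : p ∈ closedBall xb r ∩ closedBall xw r := by rw [h]; rfl
  have hpb : dist p xb ≤ r := mem_closedBall.mp hp.1
  have hpw : dist p xw ≤ r := mem_closedBall.mp hp.2
  have hbw : dist xb xw ≤ 2 * r := by
    calc dist xb xw ≤ dist xb p + dist p xw := dist_triangle _ _ _
    _ ≤ 2 * r := by rw [dist_comm xb p]; linarith
  have hm : midpoint ℝ xb xw = p := by
    have h1 : dist (midpoint ℝ xb xw) xb ≤ r := by
      rw [dist_midpoint_left]
      have : ‖(2:ℝ)‖⁻¹ = (2:ℝ)⁻¹ := by norm_num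
      rw [this]; linarith
    have h2 : dist (midpoint ℝ xb xw) xw ≤ r := by
      rw [dist_midpoint_right]
      have : ‖(2:ℝ)‖⁻¹ = (2:ℝ)⁻¹ := by norm_num
      rw [this]; linarith
    have : midpoint ℝ xb xw ∈ closedBall xb r ∩ closedBall xw r :=
      ⟨mem_closedBall.mpr h1, mem_closedBall.mpr h2⟩
    rwa [h] at this
  have hmid : xw - p = -(xb - p) := by
    rw [← hm, midpoint_eq_smul_add, invOf_eq_inv]
    module
  have hdw : dist p xw = dist p xb := by
    rw [dist_eq_norm, dist_eq_norm, ← norm_neg (p - xw)]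
    congr 1
    have : -(p - xw) = xw - p := by abel
    rw [this, hmid]; abel
  refine ⟨?_, hmid⟩
  by_contra hne
  have hlt : dist p xb < r := lt_of_le_of_ne hpb hne
  set δ : ℝ := r - dist p xb with hδ
  have hδpos : 0 < δ := by simp [hδ]; linarith
  set v : E2 := EuclideanSpace.single (0 : Fin 2) (1:ℝ) with hv
  have hvn : ‖v‖ = 1 := by rw [hv, EuclideanSpace.norm_single]; norm_num
  set q : E2 := p + δ • v with hq
  have hqp : dist q p = δ := by
    rw [dist_eq_norm, hq]
    have : p + δ • v - p = δ • v := by abel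
    rw [this, norm_smul, hvn, Real.norm_eq_abs, abs_of_pos hδpos, mul_one]
  have hq1 : q ∈ closedBall xb r := by
    rw [mem_closedBall]
    calc dist q xb ≤ dist q p + dist p xb := dist_triangle _ _ _
    _ ≤ r := by rw [hqp]; simp [hδ]
  have hq2 : q ∈ closedBall xw r := by
    rw [mem_closedBall]
    calc dist q xw ≤ dist q p + dist p xw := dist_triangle _ _ _
    _ ≤ r := by rw [hqp, hdw]; simp [hδ]
  have : q = p := by
    have : q ∈ closedBall xb r ∩ closedBall xw r := ⟨hq1, hq2⟩
    rwa [h] at this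
  have : dist q p = 0 := by rw [this, dist_self]
  rw [hqp] at this; linarith

/-- Disjoint open balls of equal radius have centers at distance at least `2r`. -/
lemma aux_disj {r : ℝ} {α β : E2}
    (h : Disjoint (ball α r) (ball β r)) : 2 * r ≤ dist α β := by
  by_contra hlt
  push_neg at hlt
  have h1 : midpoint ℝ α β ∈ ball α r := by
    rw [mem_ball, dist_midpoint_left]
    have : ‖(2:ℝ)‖⁻¹ = (2:ℝ)⁻¹ := by norm_num
    rw [this]; linarith
  have h2 : midpoint ℝ α β ∈ ball β r := by
    rw [mem_ball, dist_midpoint_right]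
    have : ‖(2:ℝ)‖⁻¹ = (2:ℝ)⁻¹ := by norm_num
    rw [this]; linarith
  exact Set.disjoint_left.mp h h1 h2

/-- Pure real arithmetic: expanding `r ≤ ‖v - r•u‖`. -/
lemma aux_sq1 {r A N I : ℝ} (hr : 0 ≤ r) (e1 : r ≤ A) (hA0 : 0 ≤ A)
    (hA : A^2 = N - 2*(r*I) + r^2) : 2*r*I ≤ N := by
  have h2 : r^2 ≤ A^2 := by nlinarith only [hr, e1]
  linarith only [h2, hA]

lemma aux_sq2 {r A N I : ℝ} (hr : 0 ≤ r) (e2 : r ≤ A) (hA0 : 0 ≤ A)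
    (hA : A^2 = N + 2*(r*I) + r^2) : -(2*r*I) ≤ N := by
  have h2 : r^2 ≤ A^2 := by nlinarith only [hr, e2]
  linarith only [h2, hA]

lemma aux_quad {r s N I : ℝ} (hs : s ≤ r) (hs0 : 0 ≤ s) (hN : 0 ≤ N)
    (k1 : 2*r*I ≤ N) (k2 : -(2*r*I) ≤ N) : 2*s*I ≤ N := by
  rcases le_or_gt 0 I with hpos | hneg
  · nlinarith [mul_nonneg (sub_nonneg.mpr hs) hpos]
  · nlinarith [mul_nonneg hs0 (le_of_lt (neg_pos.mpr hneg))]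

lemma aux_sqd {A B s : ℝ} (h : s ≤ A) (hB : A ≤ B) (hs : 0 ≤ s) : A^2 ≤ B^2 := by
  nlinarith only [h, hB, hs]

end Aux

set_option maxHeartbeats 1000000 in
/-- For an `r`-regular closed set `X ⊆ ℝ²` and boundary points `x, y` with
`‖x − y‖ < 2r`, the image under the nearest-point projection `π` onto `∂X`
of the segment `L` between `x` and `y` is contained in every closed ball of
radius at most `r` containing `L`. -/
theorem stmt16 (r : ℝ) (hr : 0 < r) (X : Set (EuclideanSpace ℝ (Fin 2)))
    (hX : IsClosed X)
    (hreg : ∀ p ∈ frontier X, ∃ xb xw : EuclideanSpace ℝ (Fin 2),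
        closedBall xb r ⊆ X ∧ closedBall xw r ⊆ closure Xᶜ ∧
        closedBall xb r ∩ closedBall xw r = {p})
    (π : EuclideanSpace ℝ (Fin 2) → EuclideanSpace ℝ (Fin 2))
    (hπ : ∀ z, infDist z (frontier X) < r →
        π z ∈ frontier X ∧ dist z (π z) = infDist z (frontier X))
    (x y : EuclideanSpace ℝ (Fin 2)) (hx : x ∈ frontier X) (hy : y ∈ frontier X)
    (hxy : dist x y < 2 * r)
    (hL : ∀ z ∈ segment ℝ x y, infDist z (frontier X) < r) :
    ∀ (c : EuclideanSpace ℝ (Fin 2)) (s : ℝ), s ≤ r →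
      segment ℝ x y ⊆ closedBall c s →
      ∀ z ∈ segment ℝ x y, π z ∈ closedBall c s := by
  -- a general fact: interior-tangent balls at frontier points keep all frontier points far
  have hfrontier_far : ∀ p ∈ frontier X, ∀ xb xw : EuclideanSpace ℝ (Fin 2),
      closedBall xb r ⊆ X → closedBall xw r ⊆ closure Xᶜ →
      ∀ q ∈ frontier X, r ≤ dist q xb ∧ r ≤ dist q xw := by
    intro p hp xb xw hb hw q hq
    obtain ⟨xb', xw', hb', hw', hs'⟩ := hreg q hq
    obtain ⟨hqb', hmid'⟩ := aux_tangent hr hs'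
    have hqw' : dist q xw' = r := by
      have h1 : q - xw' = xb' - q := by
        have h2 : q - xw' = -(xw' - q) := by abel
        rw [h2, hmid']; abel
      rw [dist_eq_norm, h1, ← dist_eq_norm, dist_comm]
      exact hqb'
    have hIb : ball xb r ⊆ interior X :=
      interior_maximal (ball_subset_closedBall.trans hb) isOpen_ball
    have hIb' : ball xb' r ⊆ interior X :=
      interior_maximal (ball_subset_closedBall.trans hb') isOpen_ball
    have hIw : ball xw r ⊆ (interior X)ᶜ := by
      intro m hm
      have := hw (ball_subset_closedBall hm)
      rwa [closure_compl] at this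
    have hIw' : ball xw' r ⊆ (interior X)ᶜ := by
      intro m hm
      have := hw' (ball_subset_closedBall hm)
      rwa [closure_compl] at this
    constructor
    · -- use outer ball at q against inner ball xb
      have hdisj : Disjoint (ball xb r) (ball xw' r) := by
        rw [Set.disjoint_left]
        intro m hm1 hm2
        exact (hIw' hm2) (hIb hm1)
      have h2r := aux_disj hdisj
      have htri : dist xb xw' ≤ dist xb q + dist q xw' := dist_triangle _ _ _
      rw [hqw'] at htri
      rw [dist_comm q xb]
      linarith
    · -- use inner ball at q against outer ball xw
      have hdisj : Disjoint (ball xb' r) (ball xw r) := by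
        rw [Set.disjoint_left]
        intro m hm1 hm2
        exact (hIw hm2) (hIb' hm1)
      have h2r := aux_disj hdisj
      have htri : dist xb' xw ≤ dist xb' q + dist q xw := dist_triangle _ _ _
      rw [dist_comm xb' q, hqb'] at htri
      linarith
  intro c s hs hB z hz
  have hs0 : 0 ≤ s := by
    have := mem_closedBall.mp (hB (left_mem_segment ℝ x y))
    exact le_trans dist_nonneg this
  have hdlt := hL z hz
  obtain ⟨hpF, hdp⟩ := hπ z hdlt
  set d := infDist z (frontier X) with hd
  set p := π z with hp
  have hd0 : 0 ≤ d := infDist_nonneg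
  rcases eq_or_lt_of_le hd0 with hd0' | hdpos
  · -- d = 0 : p = z
    have hz0 : dist z p = 0 := by rw [hdp, ← hd0']
    have hzp : p = z := by rw [dist_eq_zero] at hz0; exact hz0.symm
    rw [hzp]
    exact hB hz
  -- main case : 0 < d
  obtain ⟨xb, xw, hb, hw, hsing⟩ := hreg p hpF
  obtain ⟨hpb, hmid⟩ := aux_tangent hr hsing
  have hpw : dist p xw = r := by
    have h1 : p - xw = xb - p := by
      have h2 : p - xw = -(xw - p) := by abel
      rw [h2, hmid]; abel
    rw [dist_eq_norm, h1, ← dist_eq_norm, dist_comm]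
    exact hpb
  -- the open ball B(z,d) misses the frontier
  have hballF : ∀ w ∈ ball z d, w ∉ frontier X := by
    intro w hw' hwF
    have := infDist_le_dist_of_mem hwF (x := z)
    rw [← hd] at this
    exact absurd (mem_ball'.mp hw') (not_lt.mpr this)
  have hunion : ball z d ⊆ interior X ∪ (closure X)ᶜ := by
    intro w hw'
    have hnF := hballF w hw'
    by_cases hcl : w ∈ closure X
    · left
      by_contra hint
      exact hnF ⟨hcl, hint⟩
    · right; exact hcl
  have hdisjIC : Disjoint (interior X) ((closure X)ᶜ) := by
    rw [Set.disjoint_left]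
    intro m hm1 hm2
    exact hm2 (subset_closure (interior_subset hm1))
  have hzball : z ∈ ball z d := mem_ball_self hdpos
  -- key geometric step : find the unit normal u
  have key : ∃ u : EuclideanSpace ℝ (Fin 2), ‖u‖ = 1 ∧ z - p = d • u ∧
      (∀ q ∈ frontier X, r ≤ dist q (p + r • u) ∧ r ≤ dist q (p - r • u)) := by
    have hfar := hfrontier_far p hpF xb xw hb hw
    -- which side is z on?
    rcases hunion hzball with hzint | hzext
    · -- z in interior X : B(z,d) disjoint from closedBall xw r
      have hsub : ball z d ⊆ interior X :=
        ((convex_ball z d).isPreconnected).subset_left_of_subset_union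
          isOpen_interior (isClosed_closure.isOpen_compl) hdisjIC hunion ⟨z, hzball, hzint⟩
      have hdisjzw : ∀ w, w ∈ ball z d → w ∉ closedBall xw r := by
        intro w hw1 hw2
        have h1 := hsub hw1
        have h2 := hw hw2
        rw [closure_compl] at h2
        exact h2 h1
      -- dist z xw = d + r
      have hge : d + r ≤ dist z xw := by
        by_contra hlt
        push_neg at hlt
        set lam : ℝ := d / (d + r) with hlam
        have hdr : 0 < d + r := by linarith
        set w : EuclideanSpace ℝ (Fin 2) := z + lam • (xw - z) with hwdef
        have hw1 : w ∈ ball z d := by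
          rw [mem_ball, dist_comm, dist_eq_norm]
          have : z - w = -(lam • (xw - z)) := by rw [hwdef]; abel
          rw [this, norm_neg, norm_smul, Real.norm_eq_abs, hlam,
            abs_of_pos (div_pos hdpos hdr)]
          rw [← dist_eq_norm, dist_comm]
          calc d / (d + r) * dist z xw < d / (d + r) * (d + r) := by
                apply mul_lt_mul_of_pos_left hlt (div_pos hdpos hdr)
          _ = d := by field_simp
        have hw2 : w ∈ closedBall xw r := by
          rw [mem_closedBall, dist_eq_norm]
          have : w - xw = (lam - 1) • (xw - z) := by rw [hwdef, hlam]; module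
          rw [this, norm_smul, Real.norm_eq_abs]
          have hlam1 : lam - 1 = -(r / (d+r)) := by rw [hlam]; field_simp; ring
          rw [hlam1, abs_neg, abs_of_pos (div_pos hr hdr), ← dist_eq_norm, dist_comm]
          calc r / (d + r) * dist z xw ≤ r / (d + r) * (d + r) := by
                apply mul_le_mul_of_nonneg_left (le_of_lt hlt) (le_of_lt (div_pos hr hdr))
          _ = r := by field_simp
        exact hdisjzw w hw1 hw2
      have hle : dist z xw ≤ d + r := by
        calc dist z xw ≤ dist z p + dist p xw := dist_triangle _ _ _
        _ = d + r := by rw [hdp, hpw]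
      have heq : dist z xw = d + r := le_antisymm hle hge
      -- same ray
      have hray : SameRay ℝ (p - z) (xw - p) := by
        rw [sameRay_iff_norm_add]
        have h1 : p - z + (xw - p) = xw - z := by abel
        rw [h1, ← dist_eq_norm, ← dist_eq_norm, ← dist_eq_norm, dist_comm xw z,
          dist_comm p z, heq, hdp, dist_comm xw p, hpw]
      have hsm := hray.norm_smul_eq
      rw [← dist_eq_norm, ← dist_eq_norm, dist_comm p z, hdp, dist_comm xw p, hpw] at hsm
      -- hsm : d • (xw - p) = r • (p - z)
      refine ⟨d⁻¹ • (z - p), ?_, ?_, ?_⟩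
      · rw [norm_smul, Real.norm_eq_abs, abs_of_pos (inv_pos.mpr hdpos), ← dist_eq_norm,
          dist_comm z p, dist_comm p z, hdp]
        field_simp
      · rw [smul_inv_smul₀ (ne_of_gt hdpos)]
      · intro q hq
        have hxww : p - r • d⁻¹ • (z - p) = xw := by
          have h2 : r • d⁻¹ • (z - p) = (r * d⁻¹) • (z - p) := by rw [smul_smul]
          have h3 : xw - p = (r * d⁻¹) • (p - z) := by
            have := congrArg (fun v => d⁻¹ • v) hsm
            simp only [smul_smul] at this
            rw [inv_mul_cancel₀ (ne_of_gt hdpos), one_smul] at this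
            rw [this, mul_comm]
          rw [h2]
          have h4 : (r * d⁻¹) • (z - p) = -((r * d⁻¹) • (p - z)) := by
            rw [← smul_neg]; congr 1; abel
          rw [h4, ← h3]; abel
        have hxbb : p + r • d⁻¹ • (z - p) = xb := by
          have h5 : xb - p = -(xw - p) := by
            rw [hmid]; abel
          have h6 : xb = p - (xw - p) := by rw [sub_eq_add_neg, ← h5]; abel
          rw [h6, ← hxww]; abel
        rw [hxbb, hxww]
        exact hfar q hq
    · -- z in exterior : B(z,d) disjoint from closedBall xb r  (symmetric)
      have hsub : ball z d ⊆ (closure X)ᶜ := by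
        have := ((convex_ball z d).isPreconnected).subset_left_of_subset_union
          (isClosed_closure.isOpen_compl) isOpen_interior hdisjIC.symm
          (by intro w hw'; exact (hunion hw').symm) ⟨z, hzball, hzext⟩
        exact this
      have hdisjzb : ∀ w, w ∈ ball z d → w ∉ closedBall xb r := by
        intro w hw1 hw2
        exact (hsub hw1) (subset_closure (hb hw2))
      have hge : d + r ≤ dist z xb := by
        by_contra hlt
        push_neg at hlt
        set lam : ℝ := d / (d + r) with hlam
        have hdr : 0 < d + r := by linarith
        set w : EuclideanSpace ℝ (Fin 2) := z + lam • (xb - z) with hwdef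
        have hw1 : w ∈ ball z d := by
          rw [mem_ball, dist_comm, dist_eq_norm]
          have : z - w = -(lam • (xb - z)) := by rw [hwdef]; abel
          rw [this, norm_neg, norm_smul, Real.norm_eq_abs, hlam,
            abs_of_pos (div_pos hdpos hdr)]
          rw [← dist_eq_norm, dist_comm]
          calc d / (d + r) * dist z xb < d / (d + r) * (d + r) := by
                apply mul_lt_mul_of_pos_left hlt (div_pos hdpos hdr)
          _ = d := by field_simp
        have hw2 : w ∈ closedBall xb r := by
          rw [mem_closedBall, dist_eq_norm]
          have : w - xb = (lam - 1) • (xb - z) := by rw [hwdef, hlam]; module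
          rw [this, norm_smul, Real.norm_eq_abs]
          have hlam1 : lam - 1 = -(r / (d+r)) := by rw [hlam]; field_simp; ring
          rw [hlam1, abs_neg, abs_of_pos (div_pos hr hdr), ← dist_eq_norm, dist_comm]
          calc r / (d + r) * dist z xb ≤ r / (d + r) * (d + r) := by
                apply mul_le_mul_of_nonneg_left (le_of_lt hlt) (le_of_lt (div_pos hr hdr))
          _ = r := by field_simp
        exact hdisjzb w hw1 hw2
      have hle : dist z xb ≤ d + r := by
        calc dist z xb ≤ dist z p + dist p xb := dist_triangle _ _ _
        _ = d + r := by rw [hdp, hpb]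
      have heq : dist z xb = d + r := le_antisymm hle hge
      have hray : SameRay ℝ (p - z) (xb - p) := by
        rw [sameRay_iff_norm_add]
        have h1 : p - z + (xb - p) = xb - z := by abel
        rw [h1, ← dist_eq_norm, ← dist_eq_norm, ← dist_eq_norm, dist_comm xb z,
          dist_comm p z, heq, hdp, dist_comm xb p, hpb]
      have hsm := hray.norm_smul_eq
      rw [← dist_eq_norm, ← dist_eq_norm, dist_comm p z, hdp, dist_comm xb p, hpb] at hsm
      refine ⟨d⁻¹ • (z - p), ?_, ?_, ?_⟩
      · rw [norm_smul, Real.norm_eq_abs, abs_of_pos (inv_pos.mpr hdpos), ← dist_eq_norm,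
          dist_comm z p, dist_comm p z, hdp]
        field_simp
      · rw [smul_inv_smul₀ (ne_of_gt hdpos)]
      · intro q hq
        have hxbb : p - r • d⁻¹ • (z - p) = xb := by
          have h2 : r • d⁻¹ • (z - p) = (r * d⁻¹) • (z - p) := by rw [smul_smul]
          have h3 : xb - p = (r * d⁻¹) • (p - z) := by
            have := congrArg (fun v => d⁻¹ • v) hsm
            simp only [smul_smul] at this
            rw [inv_mul_cancel₀ (ne_of_gt hdpos), one_smul] at this
            rw [this, mul_comm]
          rw [h2]
          have h4 : (r * d⁻¹) • (z - p) = -((r * d⁻¹) • (p - z)) := by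
            rw [← smul_neg]; congr 1; abel
          rw [h4, ← h3]; abel
        have hxww : p + r • d⁻¹ • (z - p) = xw := by
          have h6 : xw = p - (xb - p) := by rw [sub_eq_add_neg, ← hmid]; abel
          rw [h6, ← hxbb]; abel
        rw [hxbb, hxww]
        exact (hfar q hq).symm
  obtain ⟨u, hu1, hzu, hfarpm⟩ := key
  -- segment data
  obtain ⟨t1, t2, ht1, ht2, hts, htz⟩ := hz
  -- d ≤ s
  have hdx : d ≤ dist z x := by rw [hd]; exact infDist_le_dist_of_mem hx
  have hdy : d ≤ dist z y := by rw [hd]; exact infDist_le_dist_of_mem hy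
  have hxc : dist x c ≤ s := mem_closedBall.mp (hB (left_mem_segment ℝ x y))
  have hyc : dist y c ≤ s := mem_closedBall.mp (hB (right_mem_segment ℝ x y))
  have hxy2s : dist x y ≤ 2 * s := by
    calc dist x y ≤ dist x c + dist c y := dist_triangle _ _ _
    _ ≤ 2 * s := by rw [dist_comm c y]; linarith
  have hzx : dist z x = t2 * dist x y := by
    have h1 : z - x = t2 • (y - x) := by
      rw [← htz]
      have ht1' : t1 = 1 - t2 := by linarith
      rw [ht1']; module
    rw [dist_eq_norm, h1, norm_smul, Real.norm_eq_abs, abs_of_nonneg ht2,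
      ← dist_eq_norm, dist_comm y x]
  have hzy : dist z y = t1 * dist x y := by
    have h1 : z - y = t1 • (x - y) := by
      rw [← htz]
      have ht2' : t2 = 1 - t1 := by linarith
      rw [ht2']; module
    rw [dist_eq_norm, h1, norm_smul, Real.norm_eq_abs, abs_of_nonneg ht1,
      ← dist_eq_norm]
  have hds : d ≤ s := by
    rcases le_or_gt t2 (1/2) with h | h
    · rw [hzx] at hdx
      have hDn : (0:ℝ) ≤ dist x y := dist_nonneg
      have hprod : 0 ≤ (1/2 - t2) * dist x y := mul_nonneg (by linarith) hDn
      linarith only [hdx, hprod, hxy2s]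
    · have ht1h : t1 ≤ 1/2 := by linarith
      rw [hzy] at hdy
      have hDn : (0:ℝ) ≤ dist x y := dist_nonneg
      have hprod : 0 ≤ (1/2 - t1) * dist x y := mul_nonneg (by linarith) hDn
      linarith only [hdy, hprod, hxy2s]
  -- inner product inequalities
  by_contra hC
  rw [mem_closedBall] at hC
  push_neg at hC
  have hE : s < ‖c - p‖ := by
    rw [← dist_eq_norm, dist_comm c p]
    exact hC
  set γ : ℝ := inner ℝ (c - p) u with hγ
  set Icx : ℝ := inner (𝕜 := ℝ) (c - p) (x - p) with hIcx
  set Icy : ℝ := inner (𝕜 := ℝ) (c - p) (y - p) with hIcy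
  set Ixu : ℝ := inner (𝕜 := ℝ) (x - p) u with hIxu
  set Iyu : ℝ := inner (𝕜 := ℝ) (y - p) u with hIyu
  have hγE : γ ≤ ‖c - p‖ := by
    calc γ ≤ ‖c - p‖ * ‖u‖ := real_inner_le_norm _ _
    _ = ‖c - p‖ := by rw [hu1, mul_one]
  -- I1 : ball constraint for x and y
  have I1x : ‖c - p‖^2 - 2 * Icx + ‖x - p‖^2 ≤ s^2 := by
    have h1 : ‖(c - p) - (x - p)‖ ≤ s := by
      have : (c - p) - (x - p) = c - x := by abel
      rw [this, ← dist_eq_norm, dist_comm c x]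
      exact hxc
    have h2 := norm_sub_sq_real (c - p) (x - p)
    nlinarith only [h1, h2, hs0, norm_nonneg ((c - p) - (x - p)), hIcx]
  have I1y : ‖c - p‖^2 - 2 * Icy + ‖y - p‖^2 ≤ s^2 := by
    have h1 : ‖(c - p) - (y - p)‖ ≤ s := by
      have : (c - p) - (y - p) = c - y := by abel
      rw [this, ← dist_eq_norm, dist_comm c y]
      exact hyc
    have h2 := norm_sub_sq_real (c - p) (y - p)
    nlinarith only [h1, h2, hs0, norm_nonneg ((c - p) - (y - p)), hIcy]
  -- I2 : tangent-ball constraints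
  have I2 : ∀ q ∈ frontier X, 2 * s * (inner (𝕜 := ℝ) (q - p) u) ≤ ‖q - p‖^2 := by
    intro q hq
    obtain ⟨hq1, hq2⟩ := hfarpm q hq
    have hru : ‖r • u‖ = r := by
      rw [norm_smul, Real.norm_eq_abs, abs_of_pos hr, hu1, mul_one]
    have e1 : r ≤ ‖(q - p) - r • u‖ := by
      have : (q - p) - r • u = q - (p + r • u) := by abel
      rw [this, ← dist_eq_norm]
      exact hq1
    have e2 : r ≤ ‖(q - p) + r • u‖ := by
      have : (q - p) + r • u = q - (p - r • u) := by abel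
      rw [this, ← dist_eq_norm]
      exact hq2
    have h1 := norm_sub_sq_real (q - p) (r • u)
    have h2 := norm_add_sq_real (q - p) (r • u)
    rw [real_inner_smul_right] at h1 h2
    rw [hru] at h1 h2
    have hA : ‖(q - p) - r • u‖^2 = ‖q - p‖^2 - 2*(r * inner (𝕜 := ℝ) (q - p) u) + r^2 := by
      rw [h1]
    have hA' : ‖(q - p) + r • u‖^2 = ‖q - p‖^2 + 2*(r * inner (𝕜 := ℝ) (q - p) u) + r^2 := by
      rw [h2]
    have k1 : 2*r*(inner (𝕜 := ℝ) (q - p) u) ≤ ‖q - p‖^2 := by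
      have h' := aux_sq1 (le_of_lt hr) e1 (norm_nonneg ((q - p) - r • u)) hA
      linarith only [h']
    have k2 : -(2*r*(inner (𝕜 := ℝ) (q - p) u)) ≤ ‖q - p‖^2 := by
      have h' := aux_sq2 (le_of_lt hr) e2 (norm_nonneg ((q - p) + r • u)) hA'
      linarith only [h']
    have h' := aux_quad hs hs0 (sq_nonneg ‖q - p‖) k1 k2
    linarith only [h']
  have I2x : 2 * s * Ixu ≤ ‖x - p‖^2 := I2 x hx
  have I2y : 2 * s * Iyu ≤ ‖y - p‖^2 := I2 y hy
  -- convex combination identities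
  have hzcomb : z - p = t1 • (x - p) + t2 • (y - p) := by
    have h1 : t1 • (x - p) + t2 • (y - p) = (t1 • x + t2 • y) - (t1 + t2) • p := by
      rw [smul_sub, smul_sub, add_smul]; abel
    rw [h1, hts, one_smul, htz]
  have hdγ : d * γ = t1 * Icx + t2 * Icy := by
    have h1 : inner (𝕜 := ℝ) (c - p) (z - p) = d * γ := by
      rw [hzu, real_inner_smul_right]
    have h2 : inner (𝕜 := ℝ) (c - p) (z - p) = t1 * Icx + t2 * Icy := by
      rw [hzcomb, inner_add_right, real_inner_smul_right, real_inner_smul_right]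
    rw [← h1, h2]
  have hdeq : d = t1 * Ixu + t2 * Iyu := by
    have h1 : inner (𝕜 := ℝ) (z - p) u = d := by
      rw [hzu, real_inner_smul_left]
      have : inner (𝕜 := ℝ) u u = 1 := by
        rw [real_inner_self_eq_norm_sq, hu1]; norm_num
      rw [this, mul_one]
    have h2 : inner (𝕜 := ℝ) (z - p) u = t1 * Ixu + t2 * Iyu := by
      rw [hzcomb, inner_add_left, real_inner_smul_left, real_inner_smul_left]
    rw [← h1, h2]
  -- assemble the main inequality : 2dγ ≥ ‖c-p‖² - s² + 2sd
  have m1 : t1 * (‖c - p‖^2 - 2 * Icx + ‖x - p‖^2) ≤ t1 * s^2 :=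
    mul_le_mul_of_nonneg_left I1x ht1
  have m2 : t2 * (‖c - p‖^2 - 2 * Icy + ‖y - p‖^2) ≤ t2 * s^2 :=
    mul_le_mul_of_nonneg_left I1y ht2
  have m3 : t1 * (2 * s * Ixu) ≤ t1 * ‖x - p‖^2 := mul_le_mul_of_nonneg_left I2x ht1
  have m4 : t2 * (2 * s * Iyu) ≤ t2 * ‖y - p‖^2 := mul_le_mul_of_nonneg_left I2y ht2
  have m5 : 2 * s * d = 2 * s * (t1 * Ixu) + 2 * s * (t2 * Iyu) := by
    rw [hdeq]; ring
  have m6 : t1 * ‖c - p‖^2 + t2 * ‖c - p‖^2 = ‖c - p‖^2 := by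
    rw [← add_mul, hts, one_mul]
  have m7 : t1 * s^2 + t2 * s^2 = s^2 := by
    rw [← add_mul, hts, one_mul]
  have m8 : 2 * (d * γ) = 2 * (t1 * Icx) + 2 * (t2 * Icy) := by rw [hdγ]; ring
  have hsum : ‖c - p‖^2 - s^2 + 2 * s * d ≤ 2 * (d * γ) := by linarith only [m1, m2, m3, m4, m5, m6, m7, m8]
  -- final contradiction
  have hEs : s^2 < ‖c - p‖^2 := by
    nlinarith only [hE, hs0]
  rcases le_or_gt γ s with h1 | h1
  · have hprod : 0 ≤ d * (s - γ) := mul_nonneg hd0 (sub_nonneg.mpr h1)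
    linarith only [hprod, hsum, hEs]
  · have hγ2 : γ^2 ≤ ‖c - p‖^2 :=
      aux_sqd (le_of_lt h1) hγE hs0
    have h3 : γ^2 - s^2 + 2 * s * d ≤ 2 * (d * γ) := by linarith
    have h4 : 0 < (γ - s) * (γ + s - 2 * d) := by
      apply mul_pos (sub_pos.mpr h1)
      linarith only [h1, hds]
    linarith only [h3, h4]
end

section
/- Let γ : S¹ → ℝ² be a continuous injective closed curve (Jordan curve) whose image is contained in a closed annular region M ⊆ ℝ² that is homeomorphic to S¹ × [−1,1] via a homeomorphism h, with h(∂-components) being S¹×{−1} and S¹×{1}. Then the image of γ separates the two boundary circles of M: every continuous path in ℝ² from a point of h⁻¹(S¹×{−1}) to a point of h⁻¹(S¹×{1}) that stays in M meets the image of γ, provided γ is not null-homotopic in M. -/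
open ContinuousMap

noncomputable def eMap : C(Circle × Set.Icc (-1:ℝ) 1, ℂ) :=
  ⟨fun p => (((2:ℝ) + (p.2 : ℝ) : ℝ) : ℂ) * (p.1 : ℂ), by fun_prop⟩

lemma norm_eMap (p : Circle × Set.Icc (-1:ℝ) 1) : ‖eMap p‖ = 2 + (p.2 : ℝ) := by
  have h1 : (-1:ℝ) ≤ p.2 := p.2.2.1
  simp only [eMap, ContinuousMap.coe_mk, norm_mul, Complex.norm_real]
  rw [show ‖(p.1 : ℂ)‖ = 1 from by exact Circle.norm_coe p.1, Real.norm_eq_abs, abs_of_pos (by linarith)]; ring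

noncomputable def qMap : C({w : ℂ // w ≠ 0}, Circle × Set.Icc (-1:ℝ) 1) :=
  ⟨fun w => (⟨(w : ℂ) / (‖(w : ℂ)‖ : ℂ), by
      simp [Submonoid.unitSphere, mem_sphere_zero_iff_norm, norm_div, w.2]⟩,
    Set.projIcc (-1) 1 (by norm_num) (‖(w : ℂ)‖ - 2)), by
    apply Continuous.prodMk
    · apply Continuous.subtype_mk
      exact continuous_subtype_val.div
        (Complex.continuous_ofReal.comp (continuous_norm.comp continuous_subtype_val))
        (fun w => by simp [w.2])
    · exact continuous_projIcc.comp
        ((continuous_norm.comp continuous_subtype_val).sub continuous_const)⟩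

lemma q_e (p : Circle × Set.Icc (-1:ℝ) 1) (hne : eMap p ≠ 0) : qMap ⟨eMap p, hne⟩ = p := by
  have h1 : (-1:ℝ) ≤ p.2 := p.2.2.1
  have hpos : (0:ℝ) < 2 + (p.2:ℝ) := by linarith
  have hc : ((2 + (p.2:ℝ) : ℝ) : ℂ) ≠ 0 := Complex.ofReal_ne_zero.2 hpos.ne'
  ext
  · show (eMap p) / (‖eMap p‖ : ℂ) = (p.1 : ℂ)
    rw [norm_eMap]
    simp only [eMap, ContinuousMap.coe_mk]
    rw [show (((2:ℝ) + (p.2:ℝ) : ℝ) : ℂ) * (p.1:ℂ) / (((2:ℝ) + (p.2:ℝ) : ℝ) : ℂ)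
        = (p.1 : ℂ) from mul_div_cancel_left₀ _ hc]
  · show (Set.projIcc (-1:ℝ) 1 (by norm_num) (‖eMap p‖ - 2) : ℝ) = (p.2 : ℝ)
    rw [norm_eMap, show (2:ℝ) + (p.2:ℝ) - 2 = (p.2 : ℝ) by ring, Set.projIcc_val]

lemma core (Γ : C(Circle, {w : ℂ // w ≠ 0})) (Cc : C(unitInterval, ℂ))
    (h1 : ∀ z, 1 ≤ ‖(Γ z : ℂ)‖) (h3 : ∀ z, ‖(Γ z : ℂ)‖ ≤ 3)
    (hC0 : ‖Cc 0‖ = 1) (hC1 : ‖Cc 1‖ = 3)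
    (hdisj : ∀ z t, (Γ z : ℂ) ≠ Cc t) :
    Γ.Homotopic (ContinuousMap.const Circle
      ⟨-Cc 1, by simp only [ne_eq, neg_eq_zero]; intro hz; rw [hz] at hC1; norm_num at hC1⟩) := by
  have hCont : Continuous fun w : {w : ℂ // w ≠ 0} => (w : ℂ) := continuous_subtype_val
  -- intermediate maps
  set Γ0 : C(Circle, {w : ℂ // w ≠ 0}) :=
    ⟨fun z => ⟨(Γ z : ℂ) - Cc 0, sub_ne_zero.2 (hdisj z 0)⟩, by
      exact Continuous.subtype_mk ((hCont.comp Γ.continuous).sub continuous_const) _⟩ with hΓ0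
  set Γ1 : C(Circle, {w : ℂ // w ≠ 0}) :=
    ⟨fun z => ⟨(Γ z : ℂ) - Cc 1, sub_ne_zero.2 (hdisj z 1)⟩, by
      exact Continuous.subtype_mk ((hCont.comp Γ.continuous).sub continuous_const) _⟩ with hΓ1
  have step1 : Γ.Homotopic Γ0 := by
    refine ⟨⟨⟨fun p => ⟨(Γ p.2 : ℂ) - (p.1 : ℝ) • Cc 0, ?_⟩, ?_⟩, ?_, ?_⟩⟩
    · rcases eq_or_lt_of_le p.1.2.2 with hu | hu
      · rw [hu]; simpa using sub_ne_zero.2 (hdisj p.2 0)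
      · intro hz
        have he : (Γ p.2 : ℂ) = (p.1 : ℝ) • Cc 0 := sub_eq_zero.1 hz
        have := congrArg norm he
        rw [norm_smul, Real.norm_eq_abs, abs_of_nonneg p.1.2.1, hC0, mul_one] at this
        have := h1 p.2
        linarith [this]
    · exact Continuous.subtype_mk
        ((hCont.comp (Γ.continuous.comp continuous_snd)).sub
          (((continuous_subtype_val.comp continuous_fst)).smul continuous_const)) _
    · intro z; ext; simp
    · intro z; ext; simp [Γ0]
  have step2 : Γ0.Homotopic Γ1 := by
    refine ⟨⟨⟨fun p => ⟨(Γ p.2 : ℂ) - Cc p.1, sub_ne_zero.2 (hdisj p.2 p.1)⟩, ?_⟩, ?_, ?_⟩⟩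
    · exact Continuous.subtype_mk
        ((hCont.comp (Γ.continuous.comp continuous_snd)).sub
          (Cc.continuous.comp continuous_fst)) _
    · intro z; ext; simp [Γ0]
    · intro z; ext; simp [Γ1]
  have step3 : Γ1.Homotopic (ContinuousMap.const Circle
      ⟨-Cc 1, by simp only [ne_eq, neg_eq_zero]; intro hz; rw [hz] at hC1; norm_num at hC1⟩) := by
    refine ⟨⟨⟨fun p => ⟨((1:ℝ) - (p.1 : ℝ)) • (Γ p.2 : ℂ) - Cc 1, ?_⟩, ?_⟩, ?_, ?_⟩⟩
    · rcases eq_or_lt_of_le p.1.2.1 with hu | hu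
      · rw [← hu]; simpa using sub_ne_zero.2 (hdisj p.2 1)
      · intro hz
        have he : Cc 1 = ((1:ℝ) - (p.1 : ℝ)) • (Γ p.2 : ℂ) := (sub_eq_zero.1 hz).symm
        have := congrArg norm he
        rw [norm_smul, Real.norm_eq_abs, abs_of_nonneg (by linarith [p.1.2.2] : (0:ℝ) ≤ 1 - (p.1:ℝ)), hC1] at this
        nlinarith [h3 p.2, h1 p.2, p.1.2.2]
    · exact Continuous.subtype_mk
        (((continuous_const.sub (continuous_subtype_val.comp continuous_fst)).smul
          (hCont.comp (Γ.continuous.comp continuous_snd))).sub continuous_const) _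
    · intro z; ext; simp [Γ1]
    · intro z; ext; simp
  exact step1.trans (step2.trans step3)



/-- A continuous injective closed curve in a closed annular region
`M ≃ₜ S¹ × [−1,1]` that is not null-homotopic in `M` separates the two
boundary circles of `M`: any path in `M` from the `S¹ × {−1}` boundary
component to the `S¹ × {1}` boundary component meets the image of the curve. -/
theorem stmt18 (M : Set (EuclideanSpace ℝ (Fin 2))) (hMc : IsCompact M)
    (h : M ≃ₜ Circle × Set.Icc (-1 : ℝ) 1)
    (γ : C(Circle, M)) (hγinj : Function.Injective γ)
    (hγnontriv : ¬ ∃ x : M, γ.Homotopic (ContinuousMap.const Circle x))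
    (σ : C(unitInterval, M))
    (hσ0 : ((h (σ 0)).2 : ℝ) = -1) (hσ1 : ((h (σ 1)).2 : ℝ) = 1) :
    ∃ (t : unitInterval) (s : Circle), σ t = γ s := by
  by_contra hcon
  push_neg at hcon
  have hnorm : ∀ x : M, 1 ≤ ‖eMap (h x)‖ ∧ ‖eMap (h x)‖ ≤ 3 := by
    intro x
    rw [norm_eMap]
    have := (h x).2.2.1
    have := (h x).2.2.2
    constructor <;> linarith
  have hne : ∀ x : M, eMap (h x) ≠ 0 := fun x hz => by
    have := (hnorm x).1; rw [hz] at this; simp at this; linarith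
  set Γ : C(Circle, {w : ℂ // w ≠ 0}) :=
    ⟨fun z => ⟨eMap (h (γ z)), hne _⟩, by
      exact Continuous.subtype_mk
        (eMap.continuous.comp (h.continuous.comp γ.continuous)) _⟩ with hΓdef
  set Cc : C(unitInterval, ℂ) :=
    ⟨fun t => eMap (h (σ t)), eMap.continuous.comp (h.continuous.comp σ.continuous)⟩ with hCdef
  have hC0 : ‖Cc 0‖ = 1 := by rw [hCdef]; simp only [ContinuousMap.coe_mk]; rw [norm_eMap, hσ0]; norm_num
  have hC1 : ‖Cc 1‖ = 3 := by rw [hCdef]; simp only [ContinuousMap.coe_mk]; rw [norm_eMap, hσ1]; norm_num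
  have hdisj : ∀ z t, (Γ z : ℂ) ≠ Cc t := by
    intro z t heq
    simp only [hΓdef, hCdef, ContinuousMap.coe_mk] at heq
    -- eMap injective
    have hn := congrArg norm heq
    rw [norm_eMap, norm_eMap] at hn
    have h2 : ((h (γ z)).2 : ℝ) = ((h (σ t)).2 : ℝ) := by linarith
    have hsnd : (h (γ z)).2 = (h (σ t)).2 := Subtype.ext h2
    have hfst : (h (γ z)).1 = (h (σ t)).1 := by
      have hc : (((2:ℝ) + ((h (γ z)).2 : ℝ) : ℝ) : ℂ) ≠ 0 := by
        have : (-1:ℝ) ≤ (h (γ z)).2 := (h (γ z)).2.2.1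
        exact Complex.ofReal_ne_zero.2 (by linarith)
      simp only [eMap, ContinuousMap.coe_mk, h2] at heq
      exact Circle.coe_injective (mul_left_cancel₀ (by rw [← h2] at heq ⊢; exact hc) heq)
    have : h (γ z) = h (σ t) := Prod.ext hfst hsnd
    exact hcon t z ((h.injective this).symm)
  have hhom := core Γ Cc (fun z => (hnorm (γ z)).1) (fun z => (hnorm (γ z)).2) hC0 hC1 hdisj
  set r : C({w : ℂ // w ≠ 0}, M) :=
    ⟨fun w => h.symm (qMap w), (h.symm.continuous.comp qMap.continuous)⟩ with hrdef
  have key : r.comp Γ = γ := by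
    apply ContinuousMap.ext
    intro z
    show h.symm (qMap ⟨eMap (h (γ z)), hne _⟩) = γ z
    rw [q_e, h.symm_apply_apply]
  have hfinal := (ContinuousMap.Homotopic.refl r).comp hhom
  rw [key] at hfinal
  exact hγnontriv ⟨r _, hfinal⟩
end

section
/- Define f : [0,1] → ℝ by f(x) = (√7 − 1/2)x for x ≤ 1/2 and f(x) = −(√7 − 1/2)x + (√7 − 1/2) for x ≥ 1/2, and define x₂ : [0,1] → ℝ by x₂(x) = √(8 − (1+x)²) − 3/2 − √(2/(1+x)² − 1/4). Then x₂(x) ≤ f(x) for all x ∈ [0,1]. -/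
/-- The function `x₂(x) = √(8 − (1+x)²) − 3/2 − √(2/(1+x)² − 1/4)` lies below
the piecewise-linear function `f` with `f(x) = (√7 − 1/2)x` for `x ≤ 1/2` and
`f(x) = −(√7 − 1/2)x + (√7 − 1/2)` for `x ≥ 1/2`, on all of `[0,1]`. -/
theorem stmt19 :
    ∀ x ∈ Set.Icc (0 : ℝ) 1,
      Real.sqrt (8 - (1 + x) ^ 2) - 3 / 2 -
          Real.sqrt (2 / (1 + x) ^ 2 - 1 / 4) ≤
        (if x ≤ 1 / 2 then (Real.sqrt 7 - 1 / 2) * x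
          else -(Real.sqrt 7 - 1 / 2) * x + (Real.sqrt 7 - 1 / 2)) := by
  intro x hx
  obtain ⟨h0, h1⟩ := hx
  set s := Real.sqrt 7 with hsdef
  have hs2 : s ^ 2 = 7 := Real.sq_sqrt (by norm_num)
  have hs0 : (0:ℝ) < s := Real.sqrt_pos.mpr (by norm_num)
  have hs1 : (2:ℝ) < s := by nlinarith
  have hp : (0:ℝ) < (1 + x) ^ 2 := by nlinarith
  have hh0 : 0 ≤ Real.sqrt (2 / (1 + x) ^ 2 - 1 / 4) := Real.sqrt_nonneg _
  by_cases hc : x ≤ 1 / 2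
  · simp only [if_pos hc]
    have hA : Real.sqrt (8 - (1 + x) ^ 2) ≤ (7 - x) * s / 7 := by
      rw [Real.sqrt_le_iff]
      constructor
      · have : (0:ℝ) ≤ 7 - x := by linarith
        positivity
      · nlinarith [hs2, sq_nonneg (7 - x), sq_nonneg x]
    have hL : (7 - x) * s / 7 - 3 / 2 - (s - 1 / 2) * x ≤
        Real.sqrt (2 / (1 + x) ^ 2 - 1 / 4) := by
      apply Real.le_sqrt_of_sq_le
      rw [le_sub_iff_add_le, le_div_iff₀ hp]
      have h529 : (529/200 : ℝ) ≤ s := by nlinarith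
      have h12 : (0:ℝ) ≤ 1/2 - x := by linarith
      have hm : 0 ≤ (s - 529/200) * ((7 - 8*x) * ((3 - x) * (1 + x)^2)) :=
        mul_nonneg (by linarith) (mul_nonneg (by linarith)
          (mul_nonneg (by linarith) (sq_nonneg _)))
      nlinarith [hs2, hm, mul_nonneg (sq_nonneg x) h12,
        mul_nonneg (mul_nonneg (sq_nonneg x) h0) h12]
    linarith
  · simp only [if_neg hc]
    push_neg at hc
    have hA : Real.sqrt (8 - (1 + x) ^ 2) ≤ 3 - x := by
      rw [Real.sqrt_le_iff]
      exact ⟨by linarith, by nlinarith [sq_nonneg (x - 1)]⟩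
    have hL : 1 - x / 2 ≤ Real.sqrt (2 / (1 + x) ^ 2 - 1 / 4) := by
      apply Real.le_sqrt_of_sq_le
      rw [le_sub_iff_add_le, le_div_iff₀ hp]
      nlinarith [sq_nonneg (x - 1), sq_nonneg (x * (x - 1)),
        mul_nonneg h0 (sub_nonneg.mpr h1)]
    nlinarith [hs1, mul_nonneg (sub_nonneg.mpr h1) (by linarith : (0:ℝ) ≤ s - 1)]
end
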